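/- Let N ≥ 2 and n ≥ 0 be integers and λ a real number. Then ∫_0^1 λ^n e^{λu} u^n (1-u)^{N+n-2} du = (-1)^n · n! · ∫_0^1 e^{λu} (1-u)^{N-2} P_n^{(0,N-2)}(1-2u) du. -/

import Mathlib

open Finset

/-- Jacobi polynomial with nonnegative integer parameters. -/
noncomputable def jacobiP (α β n : ℕ) (x : ℝ) : ℝ :=
  ∑ m ∈ Finset.range (n + 1),
    (Nat.choose (n + α) (n - m) : ℝ) * (Nat.choose (n + β) m : ℝ) *
      ((x - 1) / 2) ^ m * ((x + 1) / 2) ^ (n - m)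

/-- `k`-th derivative of `u ↦ u^n (1-u)^(n+β)`, times `(-1)^k`. -/
noncomputable def Epoly (n β k : ℕ) (u : ℝ) : ℝ :=
  ∑ j ∈ Finset.range (k + 1),
    (-1 : ℝ) ^ j * (k.choose j : ℝ) * (n.descFactorial j : ℝ) *
      ((n + β).descFactorial (k - j) : ℝ) * u ^ (n - j) * (1 - u) ^ (n + β - (k - j))

lemma Epoly_continuous (n β k : ℕ) : Continuous (Epoly n β k) := by
  unfold Epoly
  exact continuous_finset_sum _ fun j _ => by fun_prop

lemma Epoly_zero (n β : ℕ) (u : ℝ) : Epoly n β 0 u = u ^ n * (1 - u) ^ (n + β) := by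
  simp [Epoly]

lemma Epoly_boundary_zero (n β k : ℕ) (hk : k < n) : Epoly n β k 0 = 0 := by
  unfold Epoly
  refine Finset.sum_eq_zero fun j hj => ?_
  rw [Finset.mem_range] at hj
  have : (0 : ℝ) ^ (n - j) = 0 := by
    apply zero_pow; omega
  rw [this]; ring

lemma Epoly_boundary_one (n β k : ℕ) (hk : k < n) : Epoly n β k 1 = 0 := by
  unfold Epoly
  refine Finset.sum_eq_zero fun j hj => ?_
  rw [Finset.mem_range] at hj
  have : (1 - 1 : ℝ) ^ (n + β - (k - j)) = 0 := by
    rw [sub_self]; apply zero_pow; omega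
  rw [this]; ring

lemma Epoly_top (n β : ℕ) (u : ℝ) :
    Epoly n β n u = (-1 : ℝ) ^ n * (Nat.factorial n : ℝ) * (1 - u) ^ β *
      jacobiP 0 β n (1 - 2 * u) := by
  unfold Epoly jacobiP
  rw [← Finset.sum_range_reflect]
  rw [Finset.mul_sum]
  refine Finset.sum_congr rfl fun m hm => ?_
  rw [Finset.mem_range] at hm
  have hm' : m ≤ n := by omega
  have h0 : n + 1 - 1 - m = n - m := by omega
  rw [h0]
  have h1 : n - (n - m) = m := by omega
  rw [h1]
  have h2 : n + β - m = β + (n - m) := by omega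
  rw [h2]
  have hx1 : ((1 - 2*u) - 1) / 2 = -u := by ring
  have hx2 : ((1 - 2*u) + 1) / 2 = 1 - u := by ring
  rw [hx1, hx2]
  -- coefficient identity
  have hc : (n.descFactorial (n - m) : ℝ) * ((n + β).descFactorial m : ℝ)
      = (Nat.factorial n : ℝ) / (Nat.factorial m : ℝ) * ((n + β).choose m : ℝ) * (Nat.factorial m : ℝ) := by
    have hd1 : (Nat.factorial m) * n.descFactorial (n - m) = Nat.factorial n := by
      have := Nat.factorial_mul_descFactorial (Nat.sub_le n m)
      rwa [Nat.sub_sub_self hm'] at this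
    have hd2 : (n + β).descFactorial m = Nat.factorial m * (n + β).choose m :=
      Nat.descFactorial_eq_factorial_mul_choose _ _
    have hm0 : (Nat.factorial m : ℝ) ≠ 0 := Nat.cast_ne_zero.2 (Nat.factorial_ne_zero m)
    field_simp
    push_cast [← hd1, hd2]
    ring
  have hsign : (-1 : ℝ) ^ (n - m) = (-1 : ℝ) ^ n * (-1 : ℝ) ^ m := by
    have : (-1 : ℝ) ^ (n - m) * (-1 : ℝ) ^ m = (-1 : ℝ) ^ n := by
      rw [← pow_add]; congr 1; omega
    have hsq : (-1:ℝ)^m * (-1)^m = 1 := by rw [← mul_pow]; norm_num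
    calc (-1:ℝ)^(n-m) = (-1)^(n-m) * ((-1)^m * (-1)^m) := by rw [hsq, mul_one]
      _ = ((-1)^(n-m) * (-1)^m) * (-1)^m := by ring
      _ = (-1)^n * (-1)^m := by rw [this]
  rw [neg_pow u m]
  have : (Nat.factorial n : ℝ) / (Nat.factorial m : ℝ) * (Nat.factorial m : ℝ) = (Nat.factorial n : ℝ) := by
    field_simp
  calc (-1 : ℝ) ^ (n - m) * ((n.choose (n-m)) : ℝ) * (n.descFactorial (n - m) : ℝ) *
      ((n + β).descFactorial m : ℝ) * u ^ m * (1 - u) ^ (β + (n - m))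
      = (-1:ℝ)^n * (-1:ℝ)^m * ((n.choose (n-m)) : ℝ) *
        ((Nat.factorial n : ℝ) / (Nat.factorial m : ℝ) * ((n + β).choose m : ℝ) * (Nat.factorial m : ℝ))
        * u ^ m * (1 - u) ^ (β + (n-m)) := by rw [hsign, ← hc]; ring
    _ = _ := by
        rw [show (Nat.factorial n : ℝ) / (Nat.factorial m : ℝ) * ((n + β).choose m : ℝ) * (Nat.factorial m : ℝ)
          = ((n + β).choose m : ℝ) * (Nat.factorial n : ℝ) by field_simp]
        simp only [Nat.add_zero, Nat.choose_zero_right]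
        rw [pow_add]
        ring


lemma coeff_id (n β k j : ℕ) (hj : j < k) (hk : k < n) :
    (k+1).choose (j+1) * n.descFactorial (j+1) * (n+β).descFactorial (k-j)
  = k.choose j * n.descFactorial j * (n+β).descFactorial (k-j) * (n-j)
    + k.choose (j+1) * n.descFactorial (j+1) *
        ((n+β).descFactorial (k-(j+1)) * (n+β - (k-(j+1)))) := by
  have h1 : k - j = (k - (j+1)) + 1 := by omega
  rw [Nat.choose_succ_succ, h1, Nat.descFactorial_succ, Nat.descFactorial_succ]
  ring

lemma Epoly_hasDerivAt (n β k : ℕ) (hk : k < n) (u : ℝ) :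
    HasDerivAt (Epoly n β k) (-(Epoly n β (k+1) u)) u := by
  have H : HasDerivAt (Epoly n β k)
      (∑ j ∈ Finset.range (k + 1),
        ((-1 : ℝ) ^ j * (k.choose j : ℝ) * (n.descFactorial j : ℝ) *
          ((n + β).descFactorial (k - j) : ℝ) *
          (((n - j : ℕ) : ℝ) * u ^ (n - j - 1) * (1 - u) ^ (n + β - (k - j))
            - ((n + β - (k - j) : ℕ) : ℝ) * u ^ (n - j) * (1 - u) ^ (n + β - (k - j) - 1)))) u := by
    unfold Epoly
    refine HasDerivAt.fun_sum fun j hj => ?_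
    set c : ℝ := (-1 : ℝ) ^ j * (k.choose j : ℝ) * (n.descFactorial j : ℝ) *
      ((n + β).descFactorial (k - j) : ℝ) with hc
    have hp : HasDerivAt (fun u : ℝ => u ^ (n - j)) (((n - j : ℕ) : ℝ) * u ^ (n - j - 1)) u :=
      hasDerivAt_pow _ u
    have hlin : HasDerivAt (fun u : ℝ => 1 - u) (-1) u := (hasDerivAt_id u).const_sub 1
    have hq : HasDerivAt (fun u : ℝ => (1 - u) ^ (n + β - (k - j)))
        ((((n + β - (k - j) : ℕ) : ℝ) * (1 - u) ^ (n + β - (k - j) - 1)) * (-1)) u :=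
      (hasDerivAt_pow _ (1 - u)).comp u hlin
    have h2 := (hp.const_mul c).mul hq
    refine h2.congr_deriv ?_
    ring
  convert H using 1
  -- now the sum identity
  set h : ℕ → ℝ := fun j => (-1 : ℝ) ^ j * (k.choose j : ℝ) * (n.descFactorial j : ℝ) *
      ((n + β).descFactorial (k - j) : ℝ) * (((n - j : ℕ) : ℝ) * u ^ (n - j - 1) *
        (1 - u) ^ (n + β - (k - j))) with hh
  set s : ℕ → ℝ := fun j => (-1 : ℝ) ^ j * (k.choose j : ℝ) * (n.descFactorial j : ℝ) *
      ((n + β).descFactorial (k - j) : ℝ) * (((n + β - (k - j) : ℕ) : ℝ) * u ^ (n - j) *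
        (1 - u) ^ (n + β - (k - j) - 1)) with hs
  set g : ℕ → ℝ := fun j => -((-1 : ℝ) ^ j * ((k+1).choose j : ℝ) * (n.descFactorial j : ℝ) *
      ((n + β).descFactorial (k + 1 - j) : ℝ) * u ^ (n - j) * (1 - u) ^ (n + β - (k + 1 - j))) with hg
  have hRHS : ∑ j ∈ Finset.range (k + 1),
      ((-1 : ℝ) ^ j * (k.choose j : ℝ) * (n.descFactorial j : ℝ) *
          ((n + β).descFactorial (k - j) : ℝ) *
          (((n - j : ℕ) : ℝ) * u ^ (n - j - 1) * (1 - u) ^ (n + β - (k - j))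
            - ((n + β - (k - j) : ℕ) : ℝ) * u ^ (n - j) * (1 - u) ^ (n + β - (k - j) - 1)))
      = (∑ j ∈ Finset.range (k + 1), h j) - ∑ j ∈ Finset.range (k + 1), s j := by
    rw [← Finset.sum_sub_distrib]
    refine Finset.sum_congr rfl fun j _ => ?_
    simp only [hh, hs]; ring
  have hLHS : -(Epoly n β (k+1) u) = ∑ j ∈ Finset.range (k + 2), g j := by
    unfold Epoly
    rw [← Finset.sum_neg_distrib]
  rw [hRHS, hLHS]
  -- pointwise identities
  have step1 : ∀ j, j < k → g (j+1) = h j - s (j+1) := by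
    intro j hj
    have e1 : k + 1 - (j + 1) = k - j := by omega
    have e2 : n + β - (k - (j+1)) - 1 = n + β - (k - j) := by omega
    have e3 : n - (j + 1) = n - j - 1 := by omega
    simp only [hg, hh, hs, e1, e2, e3]
    have hid := coeff_id n β k j hj hk
    have hcast : (((k+1).choose (j+1) : ℝ) * (n.descFactorial (j+1) : ℝ) *
          ((n+β).descFactorial (k-j) : ℝ))
        = (k.choose j : ℝ) * (n.descFactorial j : ℝ) * ((n+β).descFactorial (k-j) : ℝ) *
            ((n-j : ℕ) : ℝ)
          + (k.choose (j+1) : ℝ) * (n.descFactorial (j+1) : ℝ) *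
              (((n+β).descFactorial (k-(j+1)) : ℝ) * ((n+β - (k-(j+1)) : ℕ) : ℝ)) := by
      exact_mod_cast congrArg (Nat.cast : ℕ → ℝ) hid
    linear_combination (((-1:ℝ)^j) * u ^ (n - j - 1) * (1 - u) ^ (n + β - (k - j))) * hcast
  have step2 : g (k+1) = h k := by
    have e1 : k + 1 - (k + 1) = 0 := by omega
    have e2 : k - k = 0 := by omega
    have e3 : n - (k + 1) = n - k - 1 := by omega
    simp only [hg, hh, e1, e2, e3, Nat.descFactorial_zero, Nat.sub_zero,
      Nat.choose_succ_self_right, Nat.choose_self, Nat.descFactorial_succ]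
    push_cast
    ring
  have step3 : g 0 = -(s 0) := by
    have e1 : n + β - (k + 1) = n + β - (k - 0) - 1 := by omega
    simp only [hg, hs, Nat.sub_zero, Nat.choose_zero_right, Nat.descFactorial_zero,
      Nat.descFactorial_succ, e1]
    push_cast
    ring
  rw [Finset.sum_range_succ' g (k+1), Finset.sum_range_succ (fun j => g (j+1)) k,
      Finset.sum_range_succ h k, Finset.sum_range_succ' s k]

  have : ∑ j ∈ Finset.range k, g (j+1) = (∑ j ∈ Finset.range k, h j) - ∑ j ∈ Finset.range k, s (j+1) := by
    rw [← Finset.sum_sub_distrib]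
    exact Finset.sum_congr rfl fun j hj => step1 j (Finset.mem_range.1 hj)
  rw [this, step2, step3]
  ring


lemma ibp_step (n β k : ℕ) (hk : k < n) (l : ℝ) :
    ∫ u in (0:ℝ)..1, l ^ (n - k) * Real.exp (l * u) * Epoly n β k u
      = ∫ u in (0:ℝ)..1, l ^ (n - (k+1)) * Real.exp (l * u) * Epoly n β (k+1) u := by
  have hc1 : Continuous fun u : ℝ => l ^ (n - k) * Real.exp (l * u) * Epoly n β k u :=
    (continuous_const.mul (Real.continuous_exp.comp (continuous_const.mul continuous_id))).mul
      (Epoly_continuous n β k)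
  have hc2 : Continuous fun u : ℝ => l ^ (n - (k+1)) * Real.exp (l * u) * Epoly n β (k+1) u :=
    (continuous_const.mul (Real.continuous_exp.comp (continuous_const.mul continuous_id))).mul
      (Epoly_continuous n β (k+1))
  have hF : ∀ u : ℝ, HasDerivAt (fun u => l ^ (n - (k+1)) * Real.exp (l * u) * Epoly n β k u)
      (l ^ (n - k) * Real.exp (l * u) * Epoly n β k u
        - l ^ (n - (k+1)) * Real.exp (l * u) * Epoly n β (k+1) u) u := by
    intro u
    have h1 : HasDerivAt (fun u : ℝ => l * u) l u := by
      simpa using (hasDerivAt_id u).const_mul l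
    have hexp : HasDerivAt (fun u : ℝ => Real.exp (l * u)) (Real.exp (l * u) * l) u :=
      (Real.hasDerivAt_exp (l * u)).comp u h1
    have h2 := (hexp.const_mul (l ^ (n - (k+1)))).mul (Epoly_hasDerivAt n β k hk u)
    refine h2.congr_deriv ?_
    have hl : l ^ (n - k) = l ^ (n - (k+1)) * l := by
      rw [← pow_succ]; congr 1; omega
    rw [hl]; ring
  have hint := intervalIntegral.integral_eq_sub_of_hasDerivAt (fun u _ => hF u)
    ((hc1.sub hc2).intervalIntegrable 0 1)
  rw [intervalIntegral.integral_sub (hc1.intervalIntegrable 0 1)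
    (hc2.intervalIntegrable 0 1)] at hint
  have hb0 : Epoly n β k 0 = 0 := Epoly_boundary_zero n β k hk
  have hb1 : Epoly n β k 1 = 0 := Epoly_boundary_one n β k hk
  rw [hb0, hb1] at hint
  simp at hint
  linarith

lemma chain (n β : ℕ) (l : ℝ) : ∀ k, k ≤ n →
    (∫ u in (0:ℝ)..1, l ^ n * Real.exp (l * u) * Epoly n β 0 u)
      = ∫ u in (0:ℝ)..1, l ^ (n - k) * Real.exp (l * u) * Epoly n β k u := by
  intro k
  induction k with
  | zero => intro _; simp
  | succ k ih =>
      intro hk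
      rw [ih (by omega), ibp_step n β k (by omega) l]

theorem stmt_6 (N : ℕ) (hN : 2 ≤ N) (n : ℕ) (l : ℝ) :
    ∫ u in (0 : ℝ)..1, l ^ n * Real.exp (l * u) * u ^ n * (1 - u) ^ (N + n - 2) =
      (-1 : ℝ) ^ n * (Nat.factorial n : ℝ) *
        ∫ u in (0 : ℝ)..1, Real.exp (l * u) * (1 - u) ^ (N - 2) *
          jacobiP 0 (N - 2) n (1 - 2 * u) := by
  have hNn : N + n - 2 = n + (N - 2) := by omega
  calc ∫ u in (0 : ℝ)..1, l ^ n * Real.exp (l * u) * u ^ n * (1 - u) ^ (N + n - 2)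
      = ∫ u in (0:ℝ)..1, l ^ n * Real.exp (l * u) * Epoly n (N-2) 0 u := by
        refine intervalIntegral.integral_congr fun u _ => ?_
        rw [Epoly_zero, hNn]; ring
    _ = ∫ u in (0:ℝ)..1, l ^ (n - n) * Real.exp (l * u) * Epoly n (N-2) n u :=
        chain n (N-2) l n le_rfl
    _ = (-1 : ℝ) ^ n * (Nat.factorial n : ℝ) *
        ∫ u in (0 : ℝ)..1, Real.exp (l * u) * (1 - u) ^ (N - 2) *
          jacobiP 0 (N - 2) n (1 - 2 * u) := by
        rw [← intervalIntegral.integral_const_mul]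
        refine intervalIntegral.integral_congr fun u _ => ?_
        rw [Epoly_top, Nat.sub_self, pow_zero]
        ring
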